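/- (Singleton bound for injection codes) Let 1 ≤ d ≤ k ≤ n and let Γ ⊆ S_{k,n} be a set of injections such that any two distinct elements of Γ have Hamming distance at least d. Then |Γ| ≤ n!/(n − k + d − 1)!. -/

import Mathlib

open scoped Classical

/-- The Hamming distance between two injections `σ, τ : [k] ↪ [n]`:
the number of positions `i ∈ [k]` with `σ(i) ≠ τ(i)`. -/
noncomputable def hamDist {k n : ℕ} (σ τ : Fin k ↪ Fin n) : ℕ :=
  (Finset.univ.filter fun i => σ i ≠ τ i).card

/-- Singleton bound for injection codes: if `Γ ⊆ S_{k,n}` has pairwise Hamming distance at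
least `d` (`1 ≤ d ≤ k ≤ n`), then `|Γ| ≤ n!/(n − k + d − 1)!`. -/
theorem stmt_11 (k n d : ℕ) (hd1 : 1 ≤ d) (hdk : d ≤ k) (hkn : k ≤ n)
    (Γ : Finset (Fin k ↪ Fin n))
    (hΓ : ∀ σ ∈ Γ, ∀ τ ∈ Γ, σ ≠ τ → d ≤ hamDist σ τ) :
    Γ.card ≤ Nat.factorial n / Nat.factorial (n - k + d - 1) := by
  set m := k - d + 1 with hm
  have hmk : m ≤ k := by omega
  let f : (Fin k ↪ Fin n) → (Fin m ↪ Fin n) :=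
    fun σ => (Fin.castLEEmb hmk).trans σ
  have hinj : Set.InjOn f Γ := by
    intro σ hσ τ hτ heq
    by_contra hne
    have hd' := hΓ σ hσ τ hτ hne
    have hagree : ∀ i : Fin k, (i : ℕ) < m → σ i = τ i := by
      intro i hi
      have := congrFun (congrArg (fun g : Fin m ↪ Fin n => (g : Fin m → Fin n)) heq)
        ⟨i, hi⟩
      simpa [f, Fin.castLEEmb, Function.Embedding.trans] using this
    have hsub : (Finset.univ.filter fun i : Fin k => σ i ≠ τ i) ⊆
        Finset.univ.filter fun i : Fin k => m ≤ (i : ℕ) := by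
      intro i hi
      simp only [Finset.mem_filter, Finset.mem_univ, true_and] at hi ⊢
      by_contra h
      exact hi (hagree i (by omega))
    have hcard : (Finset.univ.filter fun i : Fin k => m ≤ (i : ℕ)).card ≤ k - m := by
      have : (Finset.univ.filter fun i : Fin k => m ≤ (i : ℕ)).card ≤
          (Finset.Ico m k).card := by
        refine Finset.card_le_card_of_injOn (fun i => (i : ℕ)) ?_ ?_
        · intro i hi
          simp only [Finset.mem_coe, Finset.mem_filter, Finset.mem_univ, true_and] at hi
          exact Finset.mem_Ico.mpr ⟨hi, i.isLt⟩
        · intro a _ b _ h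
          exact Fin.ext h
      simpa [Nat.card_Ico] using this
    have hle : (Finset.univ.filter fun i : Fin k => σ i ≠ τ i).card ≤ k - m :=
      le_trans (Finset.card_le_card hsub) hcard
    have hd'' : d ≤ (Finset.univ.filter fun i : Fin k => σ i ≠ τ i).card := hd'
    omega
  have hcard1 : Γ.card ≤ Fintype.card (Fin m ↪ Fin n) := by
    have := Finset.card_le_card_of_injOn f (fun x _ => Finset.mem_univ (f x)) hinj
    simpa [Finset.card_univ] using this
  have hcard2 : Fintype.card (Fin m ↪ Fin n) = n.descFactorial m := by
    simp [Fintype.card_embedding_eq]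
  have hdesc : n.descFactorial m = n.factorial / (n - m).factorial :=
    Nat.descFactorial_eq_div (by omega)
  have : n - m = n - k + d - 1 := by omega
  rw [hcard2, hdesc, this] at hcard1
  exact hcard1
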